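/- Let n0 ≥ 0 and let α, β : Fin K → ℝ with α k ≥ 0, β k > 0, and γ k = α k / β k nondecreasing. Define F = n0 * ∑_{n=0}^{K-1} (γ n − γ (n−1)) * sqrt(∑_{k=n}^{K-1} β k) with γ_{−1} := 0. If x k = (n0/β k)(sqrt(∑_{m ≥ k} β m) − sqrt(∑_{m ≥ k+1} β m)), then ∑_k α k * x k = F. -/

import Mathlib

lemma abel_aux (g T : ℕ → ℝ) (K : ℕ) :
    ∑ n ∈ Finset.range K, g n * (T n - T (n+1)) =
    ∑ n ∈ Finset.range K, (g n - (if n = 0 then 0 else g (n-1))) * T n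
      - (if K = 0 then 0 else g (K-1) * T K) := by
  induction K with
  | zero => simp
  | succ K ih =>
    rw [Finset.sum_range_succ, Finset.sum_range_succ, ih]
    rcases Nat.eq_zero_or_pos K with h | h
    · subst h; simp; ring
    · have hK : K ≠ 0 := h.ne'
      simp only [hK, if_false, Nat.succ_ne_zero, Nat.add_sub_cancel]
      ring

theorem optimal_point_attains_Fmax
    (K : ℕ) (hK : 0 < K) (n0 : ℝ) (hn0 : 0 ≤ n0)
    (α β : Fin K → ℝ) (hα : ∀ k, 0 ≤ α k) (hβ : ∀ k, 0 < β k)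
    (hmono : ∀ i j : Fin K, i ≤ j → α i / β i ≤ α j / β j)
    (x : Fin K → ℝ)
    (hx : ∀ k : Fin K, x k = (n0 / β k) *
      (Real.sqrt (∑ m ∈ Finset.univ.filter (fun m => k ≤ m), β m) -
       Real.sqrt (∑ m ∈ Finset.univ.filter (fun m => k < m), β m))) :
    ∑ k, α k * x k =
      n0 * ∑ n : Fin K,
        ((α n / β n) -
          (if n.val = 0 then 0 else
            α ⟨n.val - 1, Nat.lt_of_le_of_lt (Nat.sub_le _ _) n.isLt⟩ /
            β ⟨n.val - 1, Nat.lt_of_le_of_lt (Nat.sub_le _ _) n.isLt⟩)) *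
        Real.sqrt (∑ k ∈ Finset.univ.filter (fun k => n ≤ k), β k) := by
  set γ : ℕ → ℝ := fun n => if h : n < K then α ⟨n, h⟩ / β ⟨n, h⟩ else 0 with hγ
  set T : ℕ → ℝ := fun n =>
    Real.sqrt (∑ k ∈ Finset.univ.filter (fun k : Fin K => n ≤ k.val), β k) with hT
  have hγval : ∀ (n : ℕ) (h : n < K), γ n = α ⟨n, h⟩ / β ⟨n, h⟩ := by
    intro n h; simp [hγ, h]
  have hTK : T K = 0 := by
    have he : Finset.univ.filter (fun k : Fin K => K ≤ k.val) = ∅ := by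
      ext k; simp [Nat.not_le.mpr k.isLt]
    simp [hT, he]
  have hL : ∀ k : Fin K, α k * x k = n0 * (γ k.val * (T k.val - T (k.val + 1))) := by
    intro k
    rw [hx]
    have h1 : (Finset.univ.filter (fun m : Fin K => k ≤ m)) =
        Finset.univ.filter (fun m : Fin K => k.val ≤ m.val) := by
      apply Finset.filter_congr; intro m _; exact Fin.le_def
    have h2 : (Finset.univ.filter (fun m : Fin K => k < m)) =
        Finset.univ.filter (fun m : Fin K => k.val + 1 ≤ m.val) := by
      apply Finset.filter_congr; intro m _; rw [Fin.lt_def]; omega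
    rw [h1, h2, hγval k.val k.isLt]
    simp only [hT, Fin.eta]
    ring
  have key : ∑ n ∈ Finset.range K, γ n * (T n - T (n+1)) =
      ∑ n ∈ Finset.range K, (γ n - (if n = 0 then 0 else γ (n-1))) * T n := by
    rw [abel_aux γ T K, if_neg hK.ne', hTK]
    ring
  calc ∑ k, α k * x k
      = n0 * ∑ n ∈ Finset.range K, γ n * (T n - T (n+1)) := by
        simp_rw [hL]
        rw [← Finset.mul_sum, Fin.sum_univ_eq_sum_range (fun n => γ n * (T n - T (n+1))) K]
    _ = n0 * ∑ n ∈ Finset.range K, (γ n - (if n = 0 then 0 else γ (n-1))) * T n := by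
        rw [key]
    _ = _ := by
        rw [← Fin.sum_univ_eq_sum_range (fun n => (γ n - (if n = 0 then 0 else γ (n-1))) * T n) K]
        congr 1
        apply Finset.sum_congr rfl
        intro n _
        have h1 : γ n.val = α n / β n := by rw [hγval n.val n.isLt]
        have h2 : (if n.val = 0 then (0:ℝ) else γ (n.val - 1)) =
            (if n.val = 0 then 0 else
              α ⟨n.val - 1, Nat.lt_of_le_of_lt (Nat.sub_le _ _) n.isLt⟩ /
              β ⟨n.val - 1, Nat.lt_of_le_of_lt (Nat.sub_le _ _) n.isLt⟩) := by
          by_cases h : n.val = 0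
          · simp [h]
          · rw [if_neg h, if_neg h, hγval _ (Nat.lt_of_le_of_lt (Nat.sub_le _ _) n.isLt)]
        rw [h1, h2]
        rfl
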